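/- Let U_𝔨, V_𝔨 : ℝ² → 𝔨 and U_𝔭, V_𝔭 : ℝ² → 𝔭 be C¹ maps, and for λ ∈ ℝ, λ ≠ 0, set U(λ) := U_𝔨 + λ U_𝔭 and V(λ) := V_𝔨 + λ⁻¹ V_𝔭. Assume the Maurer–Cartan equation holds at λ = 1, i.e. ∂_x V(1) − ∂_y U(1) + [U(1), V(1)] = 0 everywhere. Then the Maurer–Cartan equation ∂_x V(λ) − ∂_y U(λ) + [U(λ), V(λ)] = 0 holds everywhere for every λ ∈ ℝ \ {0} if and only if ∂_x V_𝔭 + [U_𝔨, V_𝔭] = 0 everywhere. -/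

import Mathlib

open Matrix

attribute [local instance] Matrix.normedAddCommGroup Matrix.normedSpace

noncomputable section

/-- The space of 2×2 complex matrices. -/
abbrev M2 : Type := Matrix (Fin 2) (Fin 2) ℂ

/-- Basis vector `e₁` of `su(2)`. -/
def e1 : M2 := (1 / 2 : ℂ) • !![0, Complex.I; Complex.I, 0]

/-- Basis vector `e₂` of `su(2)`. -/
def e2 : M2 := (1 / 2 : ℂ) • !![0, -1; 1, 0]

/-- Basis vector `e₃` of `su(2)`. -/
def e3 : M2 := (1 / 2 : ℂ) • !![Complex.I, 0; 0, -Complex.I]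

/-- The Lie bracket `[X, Y] = XY - YX`. -/
def br (X Y : M2) : M2 := X * Y - Y * X

/-- Partial derivative in the `x`-direction. -/
def pdx (g : ℝ × ℝ → M2) (p : ℝ × ℝ) : M2 := fderiv ℝ g p (1, 0)

/-- Partial derivative in the `y`-direction. -/
def pdy (g : ℝ × ℝ → M2) (p : ℝ × ℝ) : M2 := fderiv ℝ g p (0, 1)

/-- The loop-parameter family of connection coefficients:
`U(λ) = U_𝔨 + λ U_𝔭` and `V(λ) = V_𝔨 + λ⁻¹ V_𝔭`. -/
def Ulam (Uk Up : ℝ × ℝ → M2) (lam : ℝ) : ℝ × ℝ → M2 :=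
  fun p => Uk p + (lam : ℂ) • Up p

def Vlam (Vk Vp : ℝ × ℝ → M2) (lam : ℝ) : ℝ × ℝ → M2 :=
  fun p => Vk p + ((lam : ℂ))⁻¹ • Vp p

/-- The Maurer–Cartan expression `∂ₓV(λ) − ∂_yU(λ) + [U(λ), V(λ)]` at `p`. -/
def MC (Uk Up Vk Vp : ℝ × ℝ → M2) (lam : ℝ) (p : ℝ × ℝ) : M2 :=
  pdx (Vlam Vk Vp lam) p - pdy (Ulam Uk Up lam) p
    + br (Ulam Uk Up lam p) (Vlam Vk Vp lam p)


/-- Linear entry conditions cutting out `span ℝ {e3}`. -/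
def KP' (x : M2) : Prop := x 0 1 = 0 ∧ x 1 0 = 0 ∧ x 1 1 = -x 0 0 ∧ (x 0 0).re = 0

/-- Linear entry conditions cutting out `span ℝ {e1, e2}`. -/
def PP' (x : M2) : Prop := x 0 0 = 0 ∧ x 1 1 = 0 ∧ (x 1 0).re = -(x 0 1).re ∧ (x 1 0).im = (x 0 1).im

lemma memK (x : M2) (h : x ∈ Submodule.span ℝ ({e3} : Set M2)) : KP' x := by
  rw [Submodule.mem_span_singleton] at h
  obtain ⟨t, rfl⟩ := h
  simp [KP', e3, Complex.ext_iff]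

lemma memP (x : M2) (h : x ∈ Submodule.span ℝ ({e1, e2} : Set M2)) : PP' x := by
  rw [Submodule.mem_span_pair] at h
  obtain ⟨a, b, rfl⟩ := h
  simp [PP', e1, e2, Complex.ext_iff]

lemma brKP (x y : M2) (hx : KP' x) (hy : PP' y) : PP' (br x y) := by
  obtain ⟨h1, h2, h3, h4⟩ := hx
  obtain ⟨g1, g2, g3, g4⟩ := hy
  simp only [PP', br, Matrix.sub_apply, Matrix.mul_apply, Fin.sum_univ_two, Complex.ext_iff,
    Complex.sub_re, Complex.sub_im, Complex.add_re, Complex.add_im, Complex.mul_re, Complex.mul_im,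
    Complex.neg_re, Complex.neg_im, Complex.zero_re, Complex.zero_im,
    h1, h2, h3, h4, g1, g2, g3, g4]
  norm_num
  repeat' apply And.intro
  all_goals ring

lemma brPP (x y : M2) (hx : PP' x) (hy : PP' y) : KP' (br x y) := by
  obtain ⟨h1, h2, h3, h4⟩ := hx
  obtain ⟨g1, g2, g3, g4⟩ := hy
  simp only [KP', br, Matrix.sub_apply, Matrix.mul_apply, Fin.sum_univ_two, Complex.ext_iff,
    Complex.sub_re, Complex.sub_im, Complex.add_re, Complex.add_im, Complex.mul_re, Complex.mul_im,
    Complex.neg_re, Complex.neg_im, Complex.zero_re, Complex.zero_im,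
    h1, h2, h3, h4, g1, g2, g3, g4]
  norm_num
  repeat' apply And.intro
  all_goals ring

lemma brKK (x y : M2) (hx : KP' x) (hy : KP' y) : KP' (br x y) := by
  obtain ⟨h1, h2, h3, h4⟩ := hx
  obtain ⟨g1, g2, g3, g4⟩ := hy
  simp only [KP', br, Matrix.sub_apply, Matrix.mul_apply, Fin.sum_univ_two, Complex.ext_iff,
    Complex.sub_re, Complex.sub_im, Complex.add_re, Complex.add_im, Complex.mul_re, Complex.mul_im,
    Complex.neg_re, Complex.neg_im, Complex.zero_re, Complex.zero_im,
    h1, h2, h3, h4, g1, g2, g3, g4]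
  norm_num
  repeat' apply And.intro
  all_goals ring

lemma K_add (x y : M2) (hx : KP' x) (hy : KP' y) : KP' (x + y) := by
  obtain ⟨h1, h2, h3, h4⟩ := hx
  obtain ⟨g1, g2, g3, g4⟩ := hy
  refine ⟨?_, ?_, ?_, ?_⟩ <;>
    simp [Matrix.add_apply, h1, h2, h3, h4, g1, g2, g3, g4, Complex.add_re] <;> ring

lemma K_sub (x y : M2) (hx : KP' x) (hy : KP' y) : KP' (x - y) := by
  obtain ⟨h1, h2, h3, h4⟩ := hx
  obtain ⟨g1, g2, g3, g4⟩ := hy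
  refine ⟨?_, ?_, ?_, ?_⟩ <;>
    simp [Matrix.sub_apply, h1, h2, h3, h4, g1, g2, g3, g4, Complex.sub_re] <;> ring

lemma P_sub (x y : M2) (hx : PP' x) (hy : PP' y) : PP' (x - y) := by
  obtain ⟨h1, h2, h3, h4⟩ := hx
  obtain ⟨g1, g2, g3, g4⟩ := hy
  refine ⟨?_, ?_, ?_, ?_⟩ <;>
    simp [Matrix.sub_apply, h1, h2, h3, h4, g1, g2, g3, g4, Complex.sub_re, Complex.sub_im] <;> ring

lemma P_neg (x : M2) (hx : PP' x) : PP' (-x) := by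
  have := P_sub 0 x ⟨by simp, by simp, by simp, by simp⟩ hx
  simpa using this

lemma KP_zero (x : M2) (hx : KP' x) (hp : PP' x) : x = 0 := by
  obtain ⟨h1, h2, h3, h4⟩ := hx
  obtain ⟨g1, g2, g3, g4⟩ := hp
  ext i j
  fin_cases i <;> fin_cases j <;> simp_all

/-- The entry map as a continuous linear map. -/
def entryCLM (i j : Fin 2) : M2 →L[ℝ] ℂ :=
  LinearMap.toContinuousLinearMap
    { toFun := fun x => x i j, map_add' := fun _ _ => rfl, map_smul' := fun _ _ => rfl }

lemma entryCLM_apply (i j : Fin 2) (x : M2) : entryCLM i j x = x i j := rfl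

lemma clm_fderiv_zero {E : Type*} [NormedAddCommGroup E] [NormedSpace ℝ E]
    (φ : M2 →L[ℝ] E) (f : ℝ × ℝ → M2) (hf : Differentiable ℝ f)
    (h : ∀ q, φ (f q) = 0) (p : ℝ × ℝ) (v : ℝ × ℝ) : φ (fderiv ℝ f p v) = 0 := by
  have h1 : fderiv ℝ (fun q => φ (f q)) p = φ.comp (fderiv ℝ f p) :=
    (φ.hasFDerivAt.comp p (hf p).hasFDerivAt).fderiv
  have h2 : (fun q => φ (f q)) = fun _ => (0 : E) := funext h
  rw [h2] at h1
  rw [fderiv_fun_const] at h1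
  simpa using (DFunLike.congr_fun h1.symm v)

lemma pd_K (f : ℝ × ℝ → M2) (hf : Differentiable ℝ f) (h : ∀ q, KP' (f q))
    (p v : ℝ × ℝ) : KP' (fderiv ℝ f p v) := by
  refine ⟨?_, ?_, ?_, ?_⟩
  · exact clm_fderiv_zero (entryCLM 0 1) f hf (fun q => (h q).1) p v
  · exact clm_fderiv_zero (entryCLM 1 0) f hf (fun q => (h q).2.1) p v
  · have := clm_fderiv_zero (entryCLM 1 1 + entryCLM 0 0) f hf
      (by intro q; simp [entryCLM_apply, (h q).2.2.1]) p v
    simp only [ContinuousLinearMap.add_apply] at this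
    simp [entryCLM_apply] at this ⊢
    linear_combination this
  · have := clm_fderiv_zero (Complex.reCLM.comp (entryCLM 0 0)) f hf
      (by intro q; simp [entryCLM_apply, (h q).2.2.2]) p v
    simpa [entryCLM_apply] using this

lemma pd_P (f : ℝ × ℝ → M2) (hf : Differentiable ℝ f) (h : ∀ q, PP' (f q))
    (p v : ℝ × ℝ) : PP' (fderiv ℝ f p v) := by
  refine ⟨?_, ?_, ?_, ?_⟩
  · exact clm_fderiv_zero (entryCLM 0 0) f hf (fun q => (h q).1) p v
  · exact clm_fderiv_zero (entryCLM 1 1) f hf (fun q => (h q).2.1) p v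
  · have := clm_fderiv_zero (Complex.reCLM.comp (entryCLM 1 0 + entryCLM 0 1)) f hf
      (by intro q; simp [entryCLM_apply, (h q).2.2.1]) p v
    simp [entryCLM_apply] at this ⊢
    linarith
  · have := clm_fderiv_zero (Complex.imCLM.comp (entryCLM 1 0 - entryCLM 0 1)) f hf
      (by intro q; simp [entryCLM_apply, (h q).2.2.2]) p v
    simp [entryCLM_apply] at this ⊢
    linarith

lemma br_expand (l : ℂ) (hl : l ≠ 0) (a b c d : M2) :
    br (a + l • b) (c + l⁻¹ • d) =
      br a c + br b d + l⁻¹ • br a d + l • br b c := by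
  simp only [br, add_mul, mul_add, smul_mul_assoc, mul_smul_comm, smul_smul,
    mul_inv_cancel₀ hl, inv_mul_cancel₀ hl, one_smul, smul_sub, smul_add]
  abel

lemma fderiv_split (f g : ℝ × ℝ → M2) (hf : Differentiable ℝ f) (hg : Differentiable ℝ g)
    (c : ℂ) (p v : ℝ × ℝ) :
    fderiv ℝ (fun q => f q + c • g q) p v = fderiv ℝ f p v + c • fderiv ℝ g p v := by
  erw [fderiv_fun_add (hf p) (g := fun q => c • g q) ((hg p).const_smul c)]
  simp [fderiv_fun_const_smul (hg p) c]
  rfl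

lemma decompMC (Uk Vk Up Vp : ℝ × ℝ → M2)
    (hUkS : ContDiff ℝ 1 Uk) (hVkS : ContDiff ℝ 1 Vk)
    (hUpS : ContDiff ℝ 1 Up) (hVpS : ContDiff ℝ 1 Vp)
    (lam : ℝ) (hl : lam ≠ 0) (p : ℝ × ℝ) :
    MC Uk Up Vk Vp lam p =
      (pdx Vk p - pdy Uk p + br (Uk p) (Vk p) + br (Up p) (Vp p))
      + ((lam : ℂ))⁻¹ • (pdx Vp p + br (Uk p) (Vp p))
      + (lam : ℂ) • (br (Up p) (Vk p) - pdy Up p) := by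
  have hl' : (lam : ℂ) ≠ 0 := by exact_mod_cast hl
  have h1 : pdx (Vlam Vk Vp lam) p = pdx Vk p + ((lam : ℂ))⁻¹ • pdx Vp p :=
    fderiv_split Vk Vp (hVkS.differentiable one_ne_zero) (hVpS.differentiable one_ne_zero) _ p _
  have h2 : pdy (Ulam Uk Up lam) p = pdy Uk p + (lam : ℂ) • pdy Up p :=
    fderiv_split Uk Up (hUkS.differentiable one_ne_zero) (hUpS.differentiable one_ne_zero) _ p _
  rw [MC, h1, h2, Ulam, Vlam, br_expand _ hl']
  module

/-- if the Maurer–Cartan equation holds at `λ = 1`, then it holds for all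
real `λ ≠ 0` iff the Lorentz harmonic map equation `∂ₓV_𝔭 + [U_𝔨, V_𝔭] = 0` holds. -/
theorem statement3 (Uk Vk Up Vp : ℝ × ℝ → M2)
    (hUkS : ContDiff ℝ 1 Uk) (hVkS : ContDiff ℝ 1 Vk)
    (hUpS : ContDiff ℝ 1 Up) (hVpS : ContDiff ℝ 1 Vp)
    (hUk : ∀ p, Uk p ∈ Submodule.span ℝ ({e3} : Set M2))
    (hVk : ∀ p, Vk p ∈ Submodule.span ℝ ({e3} : Set M2))
    (hUp : ∀ p, Up p ∈ Submodule.span ℝ ({e1, e2} : Set M2))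
    (hVp : ∀ p, Vp p ∈ Submodule.span ℝ ({e1, e2} : Set M2))
    (hMC1 : ∀ p, MC Uk Up Vk Vp 1 p = 0) :
    (∀ (lam : ℝ), lam ≠ 0 → ∀ p, MC Uk Up Vk Vp lam p = 0) ↔
      (∀ p, pdx Vp p + br (Uk p) (Vp p) = 0) := by
  have dec := decompMC Uk Vk Up Vp hUkS hVkS hUpS hVpS
  have hE1 : ∀ p, (pdx Vk p - pdy Uk p + br (Uk p) (Vk p) + br (Up p) (Vp p))
      + (pdx Vp p + br (Uk p) (Vp p)) + (br (Up p) (Vk p) - pdy Up p) = 0 := by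
    intro p
    have := (dec 1 one_ne_zero p).symm.trans (hMC1 p)
    norm_num at this
    linear_combination (norm := module) this
  constructor
  · intro h p
    have E2 := (dec 2 two_ne_zero p).symm.trans (h 2 two_ne_zero p)
    have E3 := (dec (2⁻¹ : ℝ) (by norm_num) p).symm.trans (h (2⁻¹ : ℝ) (by norm_num) p)
    push_cast at E2 E3
    norm_num at E2 E3
    linear_combination (norm := module) (-2 : ℂ) • hE1 p + ((2:ℂ)/3) • E2 + ((4:ℂ)/3) • E3
  · intro hB lam hl p
    -- show the k-part and the λ-part vanish separately
    have hA : KP' (pdx Vk p - pdy Uk p + br (Uk p) (Vk p) + br (Up p) (Vp p)) := by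
      refine K_add _ _ (K_add _ _ (K_sub _ _ ?_ ?_) ?_) ?_
      · exact pd_K Vk (hVkS.differentiable one_ne_zero) (fun q => memK _ (hVk q)) p _
      · exact pd_K Uk (hUkS.differentiable one_ne_zero) (fun q => memK _ (hUk q)) p _
      · exact brKK _ _ (memK _ (hUk p)) (memK _ (hVk p))
      · exact brPP _ _ (memP _ (hUp p)) (memP _ (hVp p))
    have hC : PP' (br (Up p) (Vk p) - pdy Up p) := by
      refine P_sub _ _ ?_ ?_
      · have : br (Up p) (Vk p) = -br (Vk p) (Up p) := by simp [br]
        rw [this]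
        exact P_neg _ (brKP _ _ (memK _ (hVk p)) (memP _ (hUp p)))
      · exact pd_P Up (hUpS.differentiable one_ne_zero) (fun q => memP _ (hUp q)) p _
    have hBp : pdx Vp p + br (Uk p) (Vp p) = 0 := hB p
    have hAC : (pdx Vk p - pdy Uk p + br (Uk p) (Vk p) + br (Up p) (Vp p))
        = -(br (Up p) (Vk p) - pdy Up p) := by
      have := hE1 p
      rw [hBp] at this
      linear_combination (norm := module) this
    have hA0 : (pdx Vk p - pdy Uk p + br (Uk p) (Vk p) + br (Up p) (Vp p)) = 0 := by
      refine KP_zero _ hA ?_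
      rw [hAC]
      exact P_neg _ hC
    have hC0 : (br (Up p) (Vk p) - pdy Up p) = 0 := by
      have := hAC.symm.trans hA0
      rwa [neg_eq_zero] at this
    rw [dec lam hl p, hA0, hBp, hC0]
    simp
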